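/- Let G be a finite group, S ⊆ G a symmetric set of density σ = |S|/|G| > 0, and g, h ∈ G. Then |(g·S²·g⁻¹) ∩ (h·S²·h⁻¹)| ≥ σ²·|G|. Consequently the symmetric neighbourhood of the identity X := (gS²g⁻¹) ∩ (hS²h⁻¹) satisfies X⁴ ⊆ (gS⁸g⁻¹) ∩ (hS⁸h⁻¹). -/

import Mathlib

open Finset
open scoped Pointwise

theorem stmt11 {G : Type*} [Group G] [Fintype G] [DecidableEq G] (S : Finset G)
    (hsymm : S⁻¹ = S) (hS : S.Nonempty) (g h : G) :
    (((S.card : ℝ) / Fintype.card G) ^ 2 * Fintype.card G ≤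
      ((((S ^ 2).image fun s => g * s * g⁻¹) ∩ ((S ^ 2).image fun s => h * s * h⁻¹)).card : ℝ)) ∧
    (1 : G) ∈ ((S ^ 2).image fun s => g * s * g⁻¹) ∩ ((S ^ 2).image fun s => h * s * h⁻¹) ∧
    (((S ^ 2).image fun s => g * s * g⁻¹) ∩ ((S ^ 2).image fun s => h * s * h⁻¹))⁻¹ =
      ((S ^ 2).image fun s => g * s * g⁻¹) ∩ ((S ^ 2).image fun s => h * s * h⁻¹) ∧
    (((S ^ 2).image fun s => g * s * g⁻¹) ∩ ((S ^ 2).image fun s => h * s * h⁻¹)) ^ 4 ⊆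
      ((S ^ 8).image fun s => g * s * g⁻¹) ∩ ((S ^ 8).image fun s => h * s * h⁻¹) := by
  classical
  set X : Finset G :=
    ((S ^ 2).image fun s => g * s * g⁻¹) ∩ ((S ^ 2).image fun s => h * s * h⁻¹) with hX
  have hmemS2 : ∀ a b : G, a ∈ S → b ∈ S → a * b⁻¹ ∈ S ^ 2 := by
    intro a b ha hb
    rw [sq]
    exact Finset.mul_mem_mul ha (by rw [← hsymm]; exact Finset.inv_mem_inv hb)
  -- counting setup
  set c : G → ℕ := fun x => ∑ p ∈ S ×ˢ S, if g * p.1 * x = h * p.2 then 1 else 0 with hc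
  have hsum : ∑ x : G, c x = S.card ^ 2 := by
    rw [Finset.sum_comm]
    have : ∀ p : G × G, (∑ x : G, if g * p.1 * x = h * p.2 then 1 else 0) = 1 := by
      intro p
      simp_rw [← eq_inv_mul_iff_mul_eq]
      simp
    simp [this, sq]
  have key : ∀ p q : G × G,
      (p.1⁻¹ * g⁻¹ * (h * p.2) = q.1⁻¹ * g⁻¹ * (h * q.2)) ↔
        (g * (q.1 * p.1⁻¹) * g⁻¹ = h * (q.2 * p.2⁻¹) * h⁻¹) := by
    intro p q
    constructor
    · intro H
      have := congrArg (fun z => g * q.1 * z * (p.2⁻¹ * h⁻¹)) H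
      simpa [mul_assoc] using this
    · intro H
      have := congrArg (fun z => q.1⁻¹ * g⁻¹ * z * (h * p.2)) H
      simpa [mul_assoc] using this
  have hsq : ∑ x : G, (c x) ^ 2 =
      ∑ p ∈ S ×ˢ S, ∑ q ∈ S ×ˢ S,
        if g * (q.1 * p.1⁻¹) * g⁻¹ = h * (q.2 * p.2⁻¹) * h⁻¹ then 1 else 0 := by
    have expand : ∀ x : G, (c x) ^ 2 = ∑ p ∈ S ×ˢ S, ∑ q ∈ S ×ˢ S,
        if (g * p.1 * x = h * p.2) ∧ (g * q.1 * x = h * q.2) then 1 else 0 := by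
      intro x
      rw [sq, hc, Finset.sum_mul_sum]
      refine Finset.sum_congr rfl fun p _ => Finset.sum_congr rfl fun q _ => ?_
      by_cases h1 : g * p.1 * x = h * p.2 <;> by_cases h2 : g * q.1 * x = h * q.2 <;>
        simp [h1, h2]
    simp_rw [expand]
    rw [Finset.sum_comm]
    refine Finset.sum_congr rfl fun p _ => ?_
    rw [Finset.sum_comm]
    refine Finset.sum_congr rfl fun q _ => ?_
    have : ∀ x : G, ((g * p.1 * x = h * p.2) ∧ (g * q.1 * x = h * q.2)) ↔
        (x = p.1⁻¹ * g⁻¹ * (h * p.2) ∧ g * (q.1 * p.1⁻¹) * g⁻¹ = h * (q.2 * p.2⁻¹) * h⁻¹) := by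
      intro x
      constructor
      · rintro ⟨h1, h2⟩
        have hx : x = p.1⁻¹ * g⁻¹ * (h * p.2) := by
          rw [mul_assoc, eq_inv_mul_iff_mul_eq, eq_inv_mul_iff_mul_eq, ← mul_assoc]; exact h1
        have hx2 : x = q.1⁻¹ * g⁻¹ * (h * q.2) := by
          rw [mul_assoc, eq_inv_mul_iff_mul_eq, eq_inv_mul_iff_mul_eq, ← mul_assoc]; exact h2
        exact ⟨hx, (key p q).1 (hx ▸ hx2)⟩
      · rintro ⟨hx, H⟩
        have hx2 : p.1⁻¹ * g⁻¹ * (h * p.2) = q.1⁻¹ * g⁻¹ * (h * q.2) := (key p q).2 H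
        constructor
        · rw [hx]; group
        · rw [hx, hx2]; group
    by_cases H : g * (q.1 * p.1⁻¹) * g⁻¹ = h * (q.2 * p.2⁻¹) * h⁻¹ <;>
      simp [this, H, Finset.sum_ite_eq']
  -- the quadruple count is at most |X| * |S|^2
  have hQle : (∑ p ∈ S ×ˢ S, ∑ q ∈ S ×ˢ S,
      if g * (q.1 * p.1⁻¹) * g⁻¹ = h * (q.2 * p.2⁻¹) * h⁻¹ then 1 else 0)
        ≤ X.card * S.card ^ 2 := by
    have hcard : (∑ p ∈ S ×ˢ S, ∑ q ∈ S ×ˢ S,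
        if g * (q.1 * p.1⁻¹) * g⁻¹ = h * (q.2 * p.2⁻¹) * h⁻¹ then 1 else 0)
          = (((S ×ˢ S) ×ˢ (S ×ˢ S)).filter
              (fun r => g * (r.2.1 * r.1.1⁻¹) * g⁻¹ = h * (r.2.2 * r.1.2⁻¹) * h⁻¹)).card := by
      rw [Finset.card_filter]
      conv_rhs => rw [Finset.sum_product]
    rw [hcard]
    have hle : (((S ×ˢ S) ×ˢ (S ×ˢ S)).filter
        (fun r => g * (r.2.1 * r.1.1⁻¹) * g⁻¹ = h * (r.2.2 * r.1.2⁻¹) * h⁻¹)).card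
          ≤ (X ×ˢ (S ×ˢ S)).card := by
      apply Finset.card_le_card_of_injOn
        (fun r => (g * (r.2.1 * r.1.1⁻¹) * g⁻¹, r.2))
      · intro r hr
        simp only [Finset.mem_coe, Finset.mem_filter, Finset.mem_product] at hr
        obtain ⟨⟨⟨hp1, hp2⟩, hq1, hq2⟩, hcond⟩ := hr
        refine Finset.mem_product.2 ⟨Finset.mem_inter.2 ⟨?_, ?_⟩, Finset.mem_product.2 ⟨hq1, hq2⟩⟩
        · exact Finset.mem_image.2 ⟨r.2.1 * r.1.1⁻¹, hmemS2 _ _ hq1 hp1, rfl⟩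
        · exact Finset.mem_image.2 ⟨r.2.2 * r.1.2⁻¹, hmemS2 _ _ hq2 hp2, hcond.symm⟩
      · intro r hr r' hr' heq
        simp only [Finset.mem_coe, Finset.mem_filter] at hr hr'
        simp only [Prod.mk.injEq] at heq
        obtain ⟨h1v, h2⟩ := heq
        have h21 : r.2.1 = r'.2.1 := by rw [h2]
        have h22 : r.2.2 = r'.2.2 := by rw [h2]
        have hc1 : r.1.1 = r'.1.1 := by
          rw [h21] at h1v
          exact inv_injective (mul_left_cancel (mul_left_cancel (mul_right_cancel h1v)))
        have hc2 : r.1.2 = r'.1.2 := by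
          have hv : h * (r.2.2 * r.1.2⁻¹) * h⁻¹ = h * (r'.2.2 * r'.1.2⁻¹) * h⁻¹ := by
            rw [← hr.2, ← hr'.2]
            exact h1v
          rw [h22] at hv
          exact inv_injective (mul_left_cancel (mul_left_cancel (mul_right_cancel hv)))
        exact Prod.ext (Prod.ext hc1 hc2) h2
    calc _ ≤ (X ×ˢ (S ×ˢ S)).card := hle
      _ = X.card * S.card ^ 2 := by simp [Finset.card_product, sq, mul_assoc]
  -- Cauchy–Schwarz and assembly in ℕ
  have hCS : (∑ x : G, c x) ^ 2 ≤ Fintype.card G * ∑ x : G, (c x) ^ 2 := by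
    simpa using sq_sum_le_card_mul_sum_sq (s := Finset.univ) (f := c)
  have hN : S.card ^ 4 ≤ Fintype.card G * (X.card * S.card ^ 2) := by
    calc S.card ^ 4 = (S.card ^ 2) ^ 2 := by ring
      _ = (∑ x : G, c x) ^ 2 := by rw [hsum]
      _ ≤ Fintype.card G * ∑ x : G, (c x) ^ 2 := hCS
      _ ≤ Fintype.card G * (X.card * S.card ^ 2) := by
          rw [hsq]; exact Nat.mul_le_mul_left _ hQle
  have hScard : 0 < S.card := Finset.card_pos.2 hS
  have hmain : S.card ^ 2 ≤ Fintype.card G * X.card := by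
    have h4 : S.card ^ 4 = S.card ^ 2 * S.card ^ 2 := by ring
    have : S.card ^ 2 * S.card ^ 2 ≤ (Fintype.card G * X.card) * S.card ^ 2 := by
      rw [← h4]; calc S.card ^ 4 ≤ Fintype.card G * (X.card * S.card ^ 2) := hN
        _ = (Fintype.card G * X.card) * S.card ^ 2 := by ring
    exact Nat.le_of_mul_le_mul_right this (by positivity)
  have hGpos : (0 : ℝ) < Fintype.card G := by
    have := Fintype.card_pos_iff.2 ⟨(1 : G)⟩
    exact_mod_cast this
  refine ⟨?_, ?_, ?_, ?_⟩
  · rw [div_pow, div_mul_eq_mul_div, div_le_iff₀ (by positivity)]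
    have : ((S.card : ℝ)) ^ 2 ≤ (Fintype.card G : ℝ) * X.card := by exact_mod_cast hmain
    nlinarith [this, hGpos, sq_nonneg ((Fintype.card G : ℝ))]
  · obtain ⟨s, hs⟩ := hS
    have h1 : (1 : G) ∈ S ^ 2 := by
      have := hmemS2 s s hs hs
      simpa using this
    exact Finset.mem_inter.2
      ⟨Finset.mem_image.2 ⟨1, h1, by group⟩, Finset.mem_image.2 ⟨1, h1, by group⟩⟩
  · have hS2inv : (S ^ 2)⁻¹ = S ^ 2 := by
      rw [sq]
      ext x
      rw [Finset.mem_inv']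
      simp only [Finset.mem_mul]
      constructor
      · rintro ⟨a, ha, b, hb, hab⟩
        refine ⟨b⁻¹, by rw [← hsymm]; exact Finset.inv_mem_inv hb,
          a⁻¹, by rw [← hsymm]; exact Finset.inv_mem_inv ha, ?_⟩
        rw [← mul_inv_rev, hab, inv_inv]
      · rintro ⟨a, ha, b, hb, rfl⟩
        exact ⟨b⁻¹, by rw [← hsymm]; exact Finset.inv_mem_inv hb,
          a⁻¹, by rw [← hsymm]; exact Finset.inv_mem_inv ha, by rw [← mul_inv_rev]⟩
    have himg : ∀ k : G, ((S ^ 2).image fun s => k * s * k⁻¹)⁻¹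
        = (S ^ 2).image fun s => k * s * k⁻¹ := by
      intro k
      have hfun : (fun s => k * s * k⁻¹) = ⇑(MulAut.conj k) := rfl
      rw [hfun, ← Finset.image_inv (MulAut.conj k), hS2inv]
    rw [hX, Finset.inv_inter, himg, himg]
  · have hXsub : ∀ (k : G) (hsub' : X ⊆ (S ^ 2).image fun s => k * s * k⁻¹),
        X ^ 4 ⊆ (S ^ 8).image fun s => k * s * k⁻¹ := by
      intro k hsub'
      have hfun : (fun s : G => k * s * k⁻¹) = ⇑(MulAut.conj k) := rfl
      calc X ^ 4 ⊆ ((S ^ 2).image fun s => k * s * k⁻¹) ^ 4 :=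
            Finset.pow_subset_pow_left hsub'
        _ = (S ^ 8).image fun s => k * s * k⁻¹ := by
            rw [hfun, ← Finset.image_pow, ← pow_mul]
    intro x hx
    refine Finset.mem_inter.2 ⟨?_, ?_⟩
    · exact hXsub g (Finset.inter_subset_left) hx
    · exact hXsub h (Finset.inter_subset_right) hx
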